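/- The graded tensor product of two semisimple finite-dimensional ℤ₂-graded complex algebras is semisimple. -/

import Mathlib

open TensorProduct in
/-- `C` (with grading `Ce ⊕ Co`) is the graded tensor product of the `ℤ₂`-graded
algebras `A = Ae ⊕ Ao` and `B = Be ⊕ Bo`: there are grading-preserving algebra
homomorphisms `φ : A → C`, `ψ : B → C` whose images supercommute
(`ψ(b)·φ(a) = (-1)^{p(a)p(b)} φ(a)·ψ(b)` for homogeneous elements), such that
`a ⊗ b ↦ φ(a)·ψ(b)` is a linear isomorphism `A ⊗[ℂ] B ≃ C`, and the grading of `C`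
is induced by `p(a ⊗ b) = p(a) + p(b)`. -/
def IsGradedTensorProduct
    {A B C : Type*} [Ring A] [Ring B] [Ring C]
    [Algebra ℂ A] [Algebra ℂ B] [Algebra ℂ C]
    (Ae Ao : Submodule ℂ A) (Be Bo : Submodule ℂ B) (Ce Co : Submodule ℂ C) : Prop :=
  ∃ (φ : A →ₐ[ℂ] C) (ψ : B →ₐ[ℂ] C),
    (∀ a ∈ Ae, φ a ∈ Ce) ∧ (∀ a ∈ Ao, φ a ∈ Co) ∧
    (∀ b ∈ Be, ψ b ∈ Ce) ∧ (∀ b ∈ Bo, ψ b ∈ Co) ∧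
    (∀ a ∈ Ae, ∀ b ∈ Be, ψ b * φ a = φ a * ψ b) ∧
    (∀ a ∈ Ae, ∀ b ∈ Bo, ψ b * φ a = φ a * ψ b) ∧
    (∀ a ∈ Ao, ∀ b ∈ Be, ψ b * φ a = φ a * ψ b) ∧
    (∀ a ∈ Ao, ∀ b ∈ Bo, ψ b * φ a = -(φ a * ψ b)) ∧
    Ce = Submodule.span ℂ ({x | ∃ a ∈ Ae, ∃ b ∈ Be, x = φ a * ψ b} ∪
          {x | ∃ a ∈ Ao, ∃ b ∈ Bo, x = φ a * ψ b}) ∧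
    Co = Submodule.span ℂ ({x | ∃ a ∈ Ae, ∃ b ∈ Bo, x = φ a * ψ b} ∪
          {x | ∃ a ∈ Ao, ∃ b ∈ Be, x = φ a * ψ b}) ∧
    Function.Bijective
      (TensorProduct.lift ((LinearMap.mul ℂ C).compl₁₂ φ.toLinearMap ψ.toLinearMap))


open LinearMap TensorProduct

noncomputable section StmtAux

/-- The trace form of an algebra, as a map into the dual. -/
def tf (D : Type*) [Ring D] [Algebra ℂ D] : D →ₗ[ℂ] Module.Dual ℂ D :=
  (LinearMap.mul ℂ D).compr₂ ((LinearMap.trace ℂ D) ∘ₗ (LinearMap.mul ℂ D))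

variable {D : Type*} [Ring D] [Algebra ℂ D]

lemma tf_apply (x y : D) :
    tf D x y = LinearMap.trace ℂ D (LinearMap.mul ℂ D (x * y)) := rfl

lemma mul_comp' (x y : D) :
    LinearMap.mul ℂ D (x * y) = (LinearMap.mul ℂ D x) * (LinearMap.mul ℂ D y) := by
  have h := map_mul (Algebra.lmul ℂ D) x y
  simpa [Algebra.coe_lmul_eq_mul] using h

lemma tf_symm (x y : D) : tf D x y = tf D y x := by
  rw [tf_apply, tf_apply, mul_comp', mul_comp', LinearMap.trace_mul_comm]

/-- Trace of an endomorphism interchanging two complementary subspaces is zero. -/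
lemma trace_eq_zero_of_swap {V : Type*} [AddCommGroup V] [Module ℂ V]
    [FiniteDimensional ℂ V] {p q : Submodule ℂ V} (h : IsCompl p q) {f : V →ₗ[ℂ] V}
    (hpq : ∀ x ∈ p, f x ∈ q) (hqp : ∀ x ∈ q, f x ∈ p) :
    LinearMap.trace ℂ V f = 0 := by
  set Pe : V →ₗ[ℂ] V := p.subtype ∘ₗ p.projectionOnto q h with hPe
  set Po : V →ₗ[ℂ] V := q.subtype ∘ₗ q.projectionOnto p h.symm with hPo
  have hPe_mem : ∀ x, Pe x ∈ p := fun x => (p.projectionOnto q h x).2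
  have hPo_mem : ∀ x, Po x ∈ q := fun x => (q.projectionOnto p h.symm x).2
  have hPe_left : ∀ x ∈ p, Pe x = x := fun x hx => by
    simp [hPe, Submodule.projectionOnto_apply_of_mem_left h hx]
  have hPo_left : ∀ x ∈ q, Po x = x := fun x hx => by
    simp [hPo, Submodule.projectionOnto_apply_of_mem_left h.symm hx]
  have hPe_right : ∀ x ∈ q, Pe x = 0 := fun x hx => by
    simp [hPe, Submodule.projectionOnto_apply_of_mem_right h hx]
  have hPo_right : ∀ x ∈ p, Po x = 0 := fun x hx => by
    simp [hPo, Submodule.projectionOnto_apply_of_mem_right h.symm hx]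
  have hsum : f ∘ₗ Pe + f ∘ₗ Po = f := by
    ext x
    have hx := Submodule.projection_add_projection_eq_self h x
    simp only [LinearMap.add_apply, LinearMap.comp_apply, hPe, hPo, Submodule.coe_subtype]
    rw [← map_add]
    exact congrArg f hx
  have key : ∀ (P : V →ₗ[ℂ] V), (P ∘ₗ P = P) → (∀ x, P (f (P x)) = 0) →
      LinearMap.trace ℂ V (f ∘ₗ P) = 0 := by
    intro P hPP hzero
    have h1 : f ∘ₗ P = (f ∘ₗ P) ∘ₗ P := by rw [LinearMap.comp_assoc, hPP]
    rw [h1, LinearMap.trace_comp_comm']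
    have h2 : P ∘ₗ (f ∘ₗ P) = 0 := by ext x; simpa using hzero x
    rw [h2, map_zero]
  have tPe : LinearMap.trace ℂ V (f ∘ₗ Pe) = 0 := by
    refine key Pe ?_ ?_
    · ext x; exact hPe_left _ (hPe_mem x)
    · intro x; exact hPe_right _ (hpq _ (hPe_mem x))
  have tPo : LinearMap.trace ℂ V (f ∘ₗ Po) = 0 := by
    refine key Po ?_ ?_
    · ext x; exact hPo_left _ (hPo_mem x)
    · intro x; exact hPo_right _ (hqp _ (hPo_mem x))
  rw [← hsum, map_add, tPe, tPo, add_zero]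

/-- The trace of left multiplication by an element of the Jacobson radical vanishes. -/
lemma trace_eq_zero_of_mem_jacobson [FiniteDimensional ℂ D] {z : D}
    (hz : z ∈ Ideal.jacobson (⊥ : Ideal D)) :
    LinearMap.trace ℂ D (LinearMap.mul ℂ D z) = 0 := by
  classical
  set b := Module.finBasis ℂ D with hb
  set M := LinearMap.toMatrix b b (LinearMap.mul ℂ D z) with hM
  rw [LinearMap.trace_eq_matrix_trace ℂ b, ← hM, Matrix.trace_eq_sum_roots_charpoly]
  apply Multiset.sum_eq_zero
  intro r hr
  by_contra hr0
  have hroot : M.charpoly.IsRoot r :=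
    ((Polynomial.mem_roots M.charpoly_monic.ne_zero).mp hr)
  obtain ⟨w, hw⟩ := Ideal.mem_jacobson_iff.mp hz (-(r⁻¹ • (1 : D)))
  rw [Submodule.mem_bot] at hw
  set u : D := r • (1 : D) - z with hu
  have hinv : (r⁻¹ • w) * u = 1 := by
    have h1 : w * (-(r⁻¹ • (1 : D))) * z = -(r⁻¹ • (w * z)) := by
      rw [mul_neg, mul_smul_comm, mul_one, neg_mul, smul_mul_assoc]
    have h2 : -(r⁻¹ • (w * z)) + w = 1 := by
      rw [← h1]; rw [sub_eq_zero] at hw; exact hw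
    have h3 : (r⁻¹ • w) * (r • (1 : D)) = w := by
      rw [mul_smul_comm, mul_one, smul_smul, mul_inv_cancel₀ hr0, one_smul]
    rw [hu, mul_sub, h3, smul_mul_assoc]
    rw [← h2]; abel
  have hinj : Function.Injective (LinearMap.mul ℂ D u) := by
    intro x y hxy
    simp only [LinearMap.mul_apply'] at hxy
    have h4 := congrArg (fun t => (r⁻¹ • w) * t) hxy
    simpa only [← mul_assoc, hinv, one_mul] using h4
  have hbij : Function.Bijective (LinearMap.mul ℂ D u) :=
    ⟨hinj, (LinearMap.injective_iff_surjective).mp hinj⟩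
  have hdet : (LinearMap.toMatrix b b (LinearMap.mul ℂ D u)).det ≠ 0 := by
    set g := LinearEquiv.ofBijective _ hbij with hg
    have h1 : LinearMap.toMatrix b b (LinearMap.mul ℂ D u) *
        LinearMap.toMatrix b b (g.symm : D →ₗ[ℂ] D) = 1 := by
      rw [← LinearMap.toMatrix_comp]
      have : (LinearMap.mul ℂ D u) ∘ₗ (g.symm : D →ₗ[ℂ] D) = LinearMap.id := by
        ext x
        exact g.apply_symm_apply x
      rw [this, LinearMap.toMatrix_id]
    intro h0
    have := congrArg Matrix.det h1
    rw [Matrix.det_mul, h0, zero_mul, Matrix.det_one] at this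
    exact zero_ne_one this
  have heval : M.charpoly.eval r = (LinearMap.toMatrix b b (LinearMap.mul ℂ D u)).det := by
    have hmulu : LinearMap.mul ℂ D u = r • LinearMap.id - LinearMap.mul ℂ D z := by
      rw [hu, map_sub, map_smul]
      congr 1
      ext x
      simp [LinearMap.mul_apply']
    have hmat : LinearMap.toMatrix b b (LinearMap.mul ℂ D u)
        = r • (1 : Matrix _ _ ℂ) - M := by
      rw [hmulu, map_sub, map_smul, LinearMap.toMatrix_id]
    rw [hmat, Matrix.charpoly, ← Polynomial.coe_evalRingHom, RingHom.map_det]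
    congr 1
    ext i j
    by_cases hij : i = j
    · subst hij
      simp [Matrix.charmatrix_apply_eq, Matrix.sub_apply, Matrix.smul_apply, Matrix.one_apply]
    · simp [Matrix.charmatrix_apply_ne _ _ _ hij, Matrix.sub_apply, Matrix.smul_apply,
        Matrix.one_apply, hij]
  exact hdet (heval ▸ hroot)

/-- Semisimplicity implies nondegeneracy of the trace form. -/
lemma tf_nondeg_of_semisimple [FiniteDimensional ℂ D] (hss : IsSemisimpleRing D) :
    ∀ d : D, (∀ y, tf D d y = 0) → d = 0 := by
  intro d hd
  set R : Ideal D :=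
    { carrier := {x | ∀ y, tf D x y = 0}
      add_mem' := fun hx hy z => by
        simp only [Set.mem_setOf_eq] at *
        rw [map_add, LinearMap.add_apply, hx, hy, add_zero]
      zero_mem' := fun y => by simp
      smul_mem' := fun c x hx => by
        intro y
        simp only [Set.mem_setOf_eq] at hx
        have : tf D (c * x) y = tf D x (y * c) := by
          rw [tf_apply, tf_apply, mul_assoc, mul_comp', mul_comp',
            LinearMap.trace_mul_comm, ← mul_comp', ← mul_comp', mul_assoc]
        rw [smul_eq_mul, this, hx] } with hR
  have hdR : d ∈ R := hd
  obtain ⟨S, hS⟩ := exists_isCompl R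
  have h1top : (1 : D) ∈ R ⊔ S := by rw [hS.sup_eq_top]; trivial
  obtain ⟨e, he, f, hf, hef⟩ := Submodule.mem_sup.mp h1top
  have hre : ∀ r ∈ R, r = r * e := by
    intro r hr
    have h1 : r = r * e + r * f := by
      rw [← mul_add, hef, mul_one]
    have h2 : r * f ∈ S := S.smul_mem r hf
    have h3 : r * f ∈ R := by
      have h3' : r * f = r - r * e := eq_sub_of_add_eq' h1.symm
      rw [h3']
      exact R.sub_mem hr (R.mul_mem_left r he)
    have h4 : r * f = 0 := by
      have := hS.inf_eq_bot ▸ Submodule.mem_inf.mpr ⟨h3, h2⟩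
      simpa using this
    rw [h4, add_zero] at h1
    exact h1
  have hee : e = e * e := hre e he
  -- trace of idempotent is its rank; here the trace is zero
  have htre : LinearMap.trace ℂ D (LinearMap.mul ℂ D e) = 0 := by
    have := he 1
    rwa [tf_apply, mul_one] at this
  have hproj : LinearMap.IsProj (LinearMap.range (LinearMap.mul ℂ D e))
      (LinearMap.mul ℂ D e) := by
    constructor
    · intro x; exact ⟨x, rfl⟩
    · rintro x ⟨y, rfl⟩
      simp only [LinearMap.mul_apply']
      rw [← mul_assoc, ← hee]
  have htr := hproj.trace
  rw [htre] at htr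
  have hrank : Module.finrank ℂ (LinearMap.range (LinearMap.mul ℂ D e)) = 0 := by
    exact_mod_cast htr.symm
  have hrange : LinearMap.range (LinearMap.mul ℂ D e) = ⊥ :=
    Submodule.finrank_eq_zero.mp hrank
  have he0 : e = 0 := by
    have : LinearMap.mul ℂ D e 1 ∈ (⊥ : Submodule ℂ D) := hrange ▸ LinearMap.mem_range_self _ 1
    simpa [LinearMap.mul_apply'] using this
  rw [hre d hdR, he0, mul_zero]

lemma pi_isSemisimpleModule {ι : Type*} [Finite ι] (R₀ : Type*) [Ring R₀]
    (M : ι → Type*) [∀ i, AddCommGroup (M i)] [∀ i, Module R₀ (M i)]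
    [∀ i, IsSemisimpleModule R₀ (M i)] : IsSemisimpleModule R₀ (∀ i, M i) := by
  classical
  cases nonempty_fintype ι
  exact isSemisimpleModule_of_isSemisimpleModule_submodule'
    (p := fun i => LinearMap.range (LinearMap.single R₀ M i))
    (fun i => IsSemisimpleModule.range _)
    (by simp_rw [LinearMap.range_eq_map, Submodule.iSup_map_single, Submodule.pi_top])

/-- A finite-dimensional complex algebra with nondegenerate trace form is semisimple. -/
lemma isSemisimpleRing_of_tf_nondeg [FiniteDimensional ℂ D]
    (hnd : ∀ z : D, (∀ y, tf D z y = 0) → z = 0) : IsSemisimpleRing D := by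
  classical
  have hart : IsArtinian D D := isArtinian_of_tower ℂ inferInstance
  have hjac : Ideal.jacobson (⊥ : Ideal D) = ⊥ := by
    refine le_antisymm ?_ bot_le
    intro z hz
    rw [Submodule.mem_bot]
    apply hnd
    intro y
    rw [tf_symm, tf_apply]
    exact trace_eq_zero_of_mem_jacobson ((Ideal.jacobson ⊥).smul_mem y hz)
  set 𝒮 : Set (Ideal D) :=
    {I | ∃ t : Finset (Ideal D), (∀ J ∈ t, J.IsMaximal) ∧ I = t.inf id} with h𝒮
  have htop : (⊤ : Ideal D) ∈ 𝒮 := ⟨∅, by simp, by simp⟩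
  obtain ⟨m, ⟨t, ht, rfl⟩, hmin⟩ := IsArtinian.set_has_minimal 𝒮 ⟨⊤, htop⟩
  have hbot : t.inf id = ⊥ := by
    rw [← hjac]
    refine le_antisymm ?_ ?_
    · apply le_sInf
      rintro J ⟨-, hJ⟩
      by_contra hle
      have hmem : J ⊓ t.inf id ∈ 𝒮 := by
        refine ⟨insert J t, ?_, ?_⟩
        · intro K hK
          rcases Finset.mem_insert.mp hK with h | h
          · exact h ▸ hJ
          · exact ht K h
        · rw [Finset.inf_insert]; rfl
      have hlt : J ⊓ t.inf id < t.inf id := by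
        refine lt_of_le_of_ne inf_le_right ?_
        intro heq
        exact hle (heq ▸ inf_le_left)
      exact hmin _ hmem hlt
    · rw [hjac]; exact bot_le
  -- embed D into a finite product of simple modules
  have hsimple : ∀ J : t, IsSimpleModule D (D ⧸ (J : Ideal D)) := by
    intro J
    rw [isSimpleModule_iff_isCoatom]
    exact (Ideal.isMaximal_def).mp (ht J J.2)
  haveI hss : ∀ J : t, IsSemisimpleModule D (D ⧸ (J : Ideal D)) := by
    intro J
    have := hsimple J
    infer_instance
  haveI hpi : IsSemisimpleModule D (∀ J : t, D ⧸ (J : Ideal D)) :=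
    pi_isSemisimpleModule D (fun J : t => D ⧸ (J : Ideal D))
  set g : D →ₗ[D] ∀ J : t, D ⧸ (J : Ideal D) :=
    LinearMap.pi (fun J => (J : Ideal D).mkQ) with hg
  have hker : LinearMap.ker g = ⊥ := by
    rw [hg, LinearMap.ker_pi]
    have : ∀ J : t, LinearMap.ker (J : Ideal D).mkQ = (J : Ideal D) := fun J =>
      Submodule.ker_mkQ _
    simp_rw [this]
    rw [← hbot, Finset.inf_eq_iInf, iInf_subtype]
    rfl
  have hinj : Function.Injective g := LinearMap.ker_eq_bot.mp hker
  haveI : IsSemisimpleModule D (LinearMap.range g) :=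
    IsSemisimpleModule.submodule D (∀ J : t, D ⧸ (J : Ideal D))
  exact IsSemisimpleModule.congr (M := LinearMap.range g) (LinearEquiv.ofInjective g hinj)

end StmtAux

/-- The graded tensor product of two semisimple finite-dimensional
`ℤ₂`-graded complex algebras is semisimple: if `C` is a graded tensor product of the
finite-dimensional semisimple graded algebras `A = Ae ⊕ Ao` and `B = Be ⊕ Bo`,
then `C` is a semisimple algebra. -/
theorem stmt8 {A B C : Type*} [Ring A] [Ring B] [Ring C]
    [Algebra ℂ A] [Algebra ℂ B] [Algebra ℂ C]
    [FiniteDimensional ℂ A] [FiniteDimensional ℂ B]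
    (Ae Ao : Submodule ℂ A) (Be Bo : Submodule ℂ B) (Ce Co : Submodule ℂ C)
    (hA : IsCompl Ae Ao) (hB : IsCompl Be Bo)
    (hAee : ∀ a ∈ Ae, ∀ b ∈ Ae, a * b ∈ Ae) (hAeo : ∀ a ∈ Ae, ∀ b ∈ Ao, a * b ∈ Ao)
    (hAoe : ∀ a ∈ Ao, ∀ b ∈ Ae, a * b ∈ Ao) (hAoo : ∀ a ∈ Ao, ∀ b ∈ Ao, a * b ∈ Ae)
    (hBee : ∀ a ∈ Be, ∀ b ∈ Be, a * b ∈ Be) (hBeo : ∀ a ∈ Be, ∀ b ∈ Bo, a * b ∈ Bo)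
    (hBoe : ∀ a ∈ Bo, ∀ b ∈ Be, a * b ∈ Bo) (hBoo : ∀ a ∈ Bo, ∀ b ∈ Bo, a * b ∈ Be)
    (hssA : IsSemisimpleRing A) (hssB : IsSemisimpleRing B)
    (hC : IsGradedTensorProduct Ae Ao Be Bo Ce Co) :
    IsSemisimpleRing C := by
  classical
  obtain ⟨φ, ψ, hφe, hφo, hψe, hψo, cee, ceo, coe', coo, hCe, hCo, hbij⟩ := hC
  clear hCe hCo hφe hφo hψe hψo
  set Λ : A ⊗[ℂ] B →ₗ[ℂ] C :=
    TensorProduct.lift ((LinearMap.mul ℂ C).compl₁₂ φ.toLinearMap ψ.toLinearMap) with hΛ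
  have hΛtmul : ∀ (a : A) (b : B), Λ (a ⊗ₜ[ℂ] b) = φ a * ψ b := by
    intro a b
    simp [hΛ, LinearMap.compl₁₂_apply, LinearMap.mul_apply']
  set ΛE := LinearEquiv.ofBijective Λ hbij with hΛE
  have hΛEapp : ∀ v, ΛE v = Λ v := fun v => rfl
  haveI : FiniteDimensional ℂ C := Module.Finite.equiv ΛE
  -- projections onto graded pieces
  set Pe : A →ₗ[ℂ] A := Ae.subtype ∘ₗ Ae.projectionOnto Ao hA with hPedef
  set Po : A →ₗ[ℂ] A := Ao.subtype ∘ₗ Ao.projectionOnto Ae hA.symm with hPodef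
  set Qe : B →ₗ[ℂ] B := Be.subtype ∘ₗ Be.projectionOnto Bo hB with hQedef
  set Qo : B →ₗ[ℂ] B := Bo.subtype ∘ₗ Bo.projectionOnto Be hB.symm with hQodef
  set ε : A →ₗ[ℂ] A := Pe - Po with hεdef
  have hPe_mem : ∀ x, Pe x ∈ Ae := fun x => (Ae.projectionOnto Ao hA x).2
  have hPo_mem : ∀ x, Po x ∈ Ao := fun x => (Ao.projectionOnto Ae hA.symm x).2
  have hQe_mem : ∀ x, Qe x ∈ Be := fun x => (Be.projectionOnto Bo hB x).2
  have hQo_mem : ∀ x, Qo x ∈ Bo := fun x => (Bo.projectionOnto Be hB.symm x).2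
  have hPe_left : ∀ x ∈ Ae, Pe x = x := fun x hx => by
    simp [hPedef, Submodule.projectionOnto_apply_of_mem_left hA hx]
  have hPo_left : ∀ x ∈ Ao, Po x = x := fun x hx => by
    simp [hPodef, Submodule.projectionOnto_apply_of_mem_left hA.symm hx]
  have hPe_right : ∀ x ∈ Ao, Pe x = 0 := fun x hx => by
    simp [hPedef, Submodule.projectionOnto_apply_of_mem_right hA hx]
  have hPo_right : ∀ x ∈ Ae, Po x = 0 := fun x hx => by
    simp [hPodef, Submodule.projectionOnto_apply_of_mem_right hA.symm hx]
  have hQe_left : ∀ x ∈ Be, Qe x = x := fun x hx => by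
    simp [hQedef, Submodule.projectionOnto_apply_of_mem_left hB hx]
  have hQo_left : ∀ x ∈ Bo, Qo x = x := fun x hx => by
    simp [hQodef, Submodule.projectionOnto_apply_of_mem_left hB.symm hx]
  have hQe_right : ∀ x ∈ Bo, Qe x = 0 := fun x hx => by
    simp [hQedef, Submodule.projectionOnto_apply_of_mem_right hB hx]
  have hQo_right : ∀ x ∈ Be, Qo x = 0 := fun x hx => by
    simp [hQodef, Submodule.projectionOnto_apply_of_mem_right hB.symm hx]
  have hPsum : ∀ x, Pe x + Po x = x := fun x =>
    Submodule.projection_add_projection_eq_self hA x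
  have hQsum : ∀ x, Qe x + Qo x = x := fun x =>
    Submodule.projection_add_projection_eq_self hB x
  have hεapp : ∀ x, ε x = Pe x - Po x := fun x => rfl
  have hεε : ∀ x, ε (ε x) = x := by
    intro x
    rw [hεapp (ε x), hεapp x, map_sub, map_sub,
      hPe_left _ (hPe_mem x), hPe_right _ (hPo_mem x), hPo_right _ (hPe_mem x),
      hPo_left _ (hPo_mem x), sub_zero, zero_sub, sub_neg_eq_add, hPsum]
  have swap_mul : ∀ (x y p p' q : C), y * p = p' * y → (x * y) * (p * q) = (x * p') * (y * q) := by
    intro x y p p' q h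
    rw [mul_assoc, ← mul_assoc y, h, mul_assoc, ← mul_assoc]
  -- traces of odd multiplications vanish
  have T0A : ∀ x ∈ Ao, LinearMap.trace ℂ A (LinearMap.mul ℂ A x) = 0 := by
    intro x hx
    refine trace_eq_zero_of_swap hA ?_ ?_
    · intro y hy; simpa [LinearMap.mul_apply'] using hAoe x hx y hy
    · intro y hy; simpa [LinearMap.mul_apply'] using hAoo x hx y hy
  have T0B : ∀ x ∈ Bo, LinearMap.trace ℂ B (LinearMap.mul ℂ B x) = 0 := by
    intro x hx
    refine trace_eq_zero_of_swap hB ?_ ?_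
    · intro y hy; simpa [LinearMap.mul_apply'] using hBoe x hx y hy
    · intro y hy; simpa [LinearMap.mul_apply'] using hBoo x hx y hy
  -- aggregated commutation rules
  have commE : ∀ d ∈ Be, ∀ a : A, ψ d * φ a = φ a * ψ d := by
    intro d hd a
    have h1 : ψ d * φ (Pe a) = φ (Pe a) * ψ d := cee (Pe a) (hPe_mem a) d hd
    have h2 : ψ d * φ (Po a) = φ (Po a) * ψ d := coe' (Po a) (hPo_mem a) d hd
    have hsplit : φ a = φ (Pe a) + φ (Po a) := by rw [← map_add, hPsum a]
    rw [hsplit, mul_add, add_mul, h1, h2]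
  have commO : ∀ d ∈ Bo, ∀ a : A, ψ d * φ a = φ (ε a) * ψ d := by
    intro d hd a
    have h1 : ψ d * φ (Pe a) = φ (Pe a) * ψ d := ceo (Pe a) (hPe_mem a) d hd
    have h2 : ψ d * φ (Po a) = -(φ (Po a) * ψ d) := coo (Po a) (hPo_mem a) d hd
    have hsplit : φ a = φ (Pe a) + φ (Po a) := by rw [← map_add, hPsum a]
    have hεφ : φ (ε a) = φ (Pe a) - φ (Po a) := by rw [hεapp, map_sub]
    rw [hsplit, mul_add, h1, h2, hεφ, sub_mul, sub_eq_add_neg]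
  -- trace transport along Λ
  have trace_via : ∀ (f : A ⊗[ℂ] B →ₗ[ℂ] A ⊗[ℂ] B) (y : C),
      Λ ∘ₗ f = (LinearMap.mul ℂ C y) ∘ₗ Λ →
      LinearMap.trace ℂ C (LinearMap.mul ℂ C y) = LinearMap.trace ℂ (A ⊗[ℂ] B) f := by
    intro f y hcomm
    have hconj : ΛE.conj f = LinearMap.mul ℂ C y := by
      apply LinearMap.ext
      intro x
      rw [LinearEquiv.conj_apply]
      simp only [LinearMap.comp_apply, LinearEquiv.coe_coe]
      have h1 := congrArg (fun (F : A ⊗[ℂ] B →ₗ[ℂ] C) => F (ΛE.symm x)) hcomm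
      simp only [LinearMap.comp_apply] at h1
      rw [hΛEapp, h1]
      congr 1
      exact ΛE.apply_symm_apply x
    rw [← hconj, LinearMap.trace_conj']
  -- product formula for traces
  have heven : ∀ (c : A) (d : B), d ∈ Be →
      LinearMap.trace ℂ C (LinearMap.mul ℂ C (φ c * ψ d)) =
      LinearMap.trace ℂ A (LinearMap.mul ℂ A c) * LinearMap.trace ℂ B (LinearMap.mul ℂ B d) := by
    intro c d hd
    have hcomm : Λ ∘ₗ TensorProduct.map (LinearMap.mul ℂ A c) (LinearMap.mul ℂ B d)
        = (LinearMap.mul ℂ C (φ c * ψ d)) ∘ₗ Λ := by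
      apply TensorProduct.ext'
      intro a b
      simp only [LinearMap.comp_apply, TensorProduct.map_tmul, hΛtmul, LinearMap.mul_apply']
      rw [map_mul, map_mul, swap_mul (φ c) (ψ d) (φ a) (φ a) (ψ b) (commE d hd a)]
    rw [trace_via _ _ hcomm, LinearMap.trace_tensorProduct']
  have hodd : ∀ (c : A) (d : B), d ∈ Bo →
      LinearMap.trace ℂ C (LinearMap.mul ℂ C (φ c * ψ d)) = 0 := by
    intro c d hd
    have hcomm : Λ ∘ₗ TensorProduct.map ((LinearMap.mul ℂ A c) ∘ₗ ε) (LinearMap.mul ℂ B d)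
        = (LinearMap.mul ℂ C (φ c * ψ d)) ∘ₗ Λ := by
      apply TensorProduct.ext'
      intro a b
      simp only [LinearMap.comp_apply, TensorProduct.map_tmul, hΛtmul, LinearMap.mul_apply']
      rw [map_mul, map_mul, swap_mul (φ c) (ψ d) (φ a) (φ (ε a)) (ψ b) (commO d hd a)]
    rw [trace_via _ _ hcomm, LinearMap.trace_tensorProduct', T0B d hd, mul_zero]
  have T1 : ∀ (c : A) (d : B),
      LinearMap.trace ℂ C (LinearMap.mul ℂ C (φ c * ψ d)) =
      LinearMap.trace ℂ A (LinearMap.mul ℂ A c) * LinearMap.trace ℂ B (LinearMap.mul ℂ B d) := by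
    intro c d
    have hψd : ψ d = ψ (Qe d) + ψ (Qo d) := by rw [← map_add, hQsum d]
    have e1 : φ c * ψ d = φ c * ψ (Qe d) + φ c * ψ (Qo d) := by rw [hψd, mul_add]
    have e3 : LinearMap.trace ℂ B (LinearMap.mul ℂ B d)
        = LinearMap.trace ℂ B (LinearMap.mul ℂ B (Qe d)) := by
      conv_lhs => rw [← hQsum d]
      rw [map_add, map_add, T0B _ (hQo_mem d), add_zero]
    rw [e1, map_add, map_add, heven c _ (hQe_mem d), hodd c _ (hQo_mem d), add_zero, e3]
  -- cross-parity vanishing and ε-symmetry of the A trace form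
  have crossA : ∀ x ∈ Ae, ∀ y ∈ Ao, tf A x y = 0 := fun x hx y hy => by
    rw [tf_apply]; exact T0A _ (hAeo x hx y hy)
  have crossA' : ∀ x ∈ Ao, ∀ y ∈ Ae, tf A x y = 0 := fun x hx y hy => by
    rw [tf_apply]; exact T0A _ (hAoe x hx y hy)
  have tfeps : ∀ a a' : A, tf A a (ε a') = tf A (ε a) a' := by
    intro a a'
    have f1 : ∀ v, tf A a v = tf A (Pe a) v + tf A (Po a) v := by
      intro v
      conv_lhs => rw [← hPsum a]
      rw [map_add, LinearMap.add_apply]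
    have f2 : ∀ u, tf A u a' = tf A u (Pe a') + tf A u (Po a') := by
      intro u
      conv_lhs => rw [← hPsum a']
      rw [map_add]
    rw [hεapp a, hεapp a', map_sub, map_sub, LinearMap.sub_apply]
    rw [f1 (Pe a'), f1 (Po a'), f2 (Pe a), f2 (Po a)]
    rw [crossA _ (hPe_mem a) _ (hPo_mem a'), crossA' _ (hPo_mem a) _ (hPe_mem a')]
  -- the twisting involution τ and the reference form W
  set W : A ⊗[ℂ] B →ₗ[ℂ] Module.Dual ℂ (A ⊗[ℂ] B) :=
    (TensorProduct.dualDistrib ℂ A B) ∘ₗ (TensorProduct.map (tf A) (tf B)) with hWdef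
  set τ : A ⊗[ℂ] B →ₗ[ℂ] A ⊗[ℂ] B :=
    TensorProduct.map LinearMap.id Qe + TensorProduct.map ε Qo with hτdef
  have hτtmul : ∀ (a : A) (b : B), τ (a ⊗ₜ[ℂ] b) = a ⊗ₜ[ℂ] Qe b + ε a ⊗ₜ[ℂ] Qo b := by
    intro a b
    simp [hτdef]
  have hττ : τ ∘ₗ τ = LinearMap.id := by
    apply TensorProduct.ext'
    intro a b
    simp only [LinearMap.comp_apply, hτtmul, map_add, LinearMap.id_apply]
    rw [hQe_left _ (hQe_mem b), hQo_right _ (hQe_mem b), hQe_right _ (hQo_mem b),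
      hQo_left _ (hQo_mem b), hεε, TensorProduct.tmul_zero,
      add_zero, zero_add, ← TensorProduct.tmul_add, hQsum]
  -- W is injective
  have hAbij : Function.Bijective (tf A) := by
    have hAinj : Function.Injective (tf A) := by
      rw [← LinearMap.ker_eq_bot]
      refine (Submodule.eq_bot_iff _).mpr ?_
      intro a ha
      rw [LinearMap.mem_ker] at ha
      exact tf_nondeg_of_semisimple hssA a (fun y => by rw [ha]; rfl)
    exact ⟨hAinj, (LinearMap.injective_iff_surjective_of_finrank_eq_finrank
      (Subspace.dual_finrank_eq (V := A)).symm).mp hAinj⟩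
  have hBbij : Function.Bijective (tf B) := by
    have hBinj : Function.Injective (tf B) := by
      rw [← LinearMap.ker_eq_bot]
      refine (Submodule.eq_bot_iff _).mpr ?_
      intro b hb
      rw [LinearMap.mem_ker] at hb
      exact tf_nondeg_of_semisimple hssB b (fun y => by rw [hb]; rfl)
    exact ⟨hBinj, (LinearMap.injective_iff_surjective_of_finrank_eq_finrank
      (Subspace.dual_finrank_eq (V := B)).symm).mp hBinj⟩
  have hWinj : Function.Injective W := by
    have hmapinj : Function.Injective (TensorProduct.map (tf A) (tf B)) := by
      have heq : TensorProduct.map (tf A) (tf B)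
          = (TensorProduct.congr (LinearEquiv.ofBijective _ hAbij)
              (LinearEquiv.ofBijective _ hBbij)).toLinearMap := by
        apply TensorProduct.ext'
        intro a b
        simp [TensorProduct.congr_tmul]
      rw [heq]
      exact (TensorProduct.congr _ _).injective
    have hddinj : Function.Injective (TensorProduct.dualDistrib ℂ A B) := by
      intro x y hxy
      exact (TensorProduct.dualDistribEquivOfBasis (Module.Free.chooseBasis ℂ A)
        (Module.Free.chooseBasis ℂ B)).injective hxy
    rw [hWdef]
    rw [LinearMap.coe_comp]
    exact hddinj.comp hmapinj
  -- the key identity between the trace form of C and the twisted tensor form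
  have KEY : LinearMap.compl₂ ((tf C) ∘ₗ Λ) Λ = W ∘ₗ τ := by
    apply TensorProduct.ext'
    intro a b
    apply TensorProduct.ext'
    intro a' b'
    simp only [LinearMap.compl₂_apply, LinearMap.comp_apply, hΛtmul, hτtmul, map_add,
      LinearMap.add_apply, hWdef, TensorProduct.map_tmul, TensorProduct.dualDistrib_apply]
    -- RHS is now `tf A a a' * tf B (Qe b) b' + tf A (ε a) a' * tf B (Qo b) b'`
    have hbsplit : φ a * ψ b = φ a * ψ (Qe b) + φ a * ψ (Qo b) := by
      rw [← mul_add, ← map_add, hQsum b]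
    have heq1 : (φ a * ψ (Qe b)) * (φ a' * ψ b') = φ (a * a') * ψ (Qe b * b') := by
      rw [map_mul, map_mul, swap_mul (φ a) (ψ (Qe b)) (φ a') (φ a') (ψ b')
        (commE _ (hQe_mem b) a')]
    have heq2 : (φ a * ψ (Qo b)) * (φ a' * ψ b') = φ (a * ε a') * ψ (Qo b * b') := by
      rw [map_mul, map_mul, swap_mul (φ a) (ψ (Qo b)) (φ a') (φ (ε a')) (ψ b')
        (commO _ (hQo_mem b) a')]
    rw [hbsplit, map_add, LinearMap.add_apply]
    rw [tf_apply, tf_apply, heq1, heq2, T1 (a * a') (Qe b * b'), T1 (a * ε a') (Qo b * b')]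
    rw [← tfeps a a']
    rfl
  -- conclusion
  refine isSemisimpleRing_of_tf_nondeg ?_
  intro z hz
  set u := ΛE.symm z with hudef
  have hΛu : Λ u = z := ΛE.apply_symm_apply z
  have hWτu : W (τ u) = 0 := by
    apply LinearMap.ext
    intro v
    have h0 := congrArg (fun F : A ⊗[ℂ] B →ₗ[ℂ] Module.Dual ℂ (A ⊗[ℂ] B) => F u) KEY
    have h1 := congrArg (fun F : Module.Dual ℂ (A ⊗[ℂ] B) => F v) h0
    simp only [LinearMap.compl₂_apply, LinearMap.comp_apply] at h1
    rw [LinearMap.zero_apply, ← h1, hΛu]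
    exact hz (Λ v)
  have hτu0 : τ u = 0 := hWinj (by rw [hWτu, map_zero])
  have hu0 : u = 0 := by
    have h2 := congrArg (fun F : A ⊗[ℂ] B →ₗ[ℂ] A ⊗[ℂ] B => F u) hττ
    simp only [LinearMap.comp_apply, LinearMap.id_apply] at h2
    rw [hτu0, map_zero] at h2
    exact h2.symm
  rw [← hΛu, hu0, map_zero]
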